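/- arXiv:0906.2954 — 2 statements merged into one kernel-verified Lean document; each statement's English description precedes it below -/
import Mathlib

section
/- In the strictified free SAI category A^st on form sets, if u : X → Y is an arrow and P is a set of letters such that for every subformset U∧V of X, let(U) ⊆ P iff let(V) ⊆ P, then the same equivalence holds for every subformset U∧V of Y. In particular, for any arrow u : X₁∨X₂ → Y and every subformset U∧V of Y, let(U) ⊆ let(X₁) iff let(V) ⊆ let(X₁). -/
namespace AST

/-- Formulas over an infinite set of letters with the connectives ∨ and ∧.
The objects of the strictified free SAI category 𝓐^st are the form
(multi)sets, i.e. the equivalence classes of formulas modulo the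
associativity-commutativity equivalence `AC` below; we work with explicit
representatives. -/
inductive Frm2 : Type
  | pl : ℕ → Frm2
  | or : Frm2 → Frm2 → Frm2
  | and : Frm2 → Frm2 → Frm2
  deriving DecidableEq

/-- Associativity-commutativity equivalence of formulas : two formulas are
related iff they denote the same form multiset. -/
inductive AC : Frm2 → Frm2 → Prop
  | refl (A : Frm2) : AC A A
  | symm {A B : Frm2} : AC A B → AC B A
  | trans {A B C : Frm2} : AC A B → AC B C → AC A C
  | orCongr {A A' B B' : Frm2} : AC A A' → AC B B' → AC (A.or B) (A'.or B')
  | andCongr {A A' B B' : Frm2} : AC A A' → AC B B' → AC (A.and B) (A'.and B')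
  | orAssoc (A B C : Frm2) : AC (A.or (B.or C)) ((A.or B).or C)
  | andAssoc (A B C : Frm2) : AC (A.and (B.and C)) ((A.and B).and C)
  | orComm (A B : Frm2) : AC (A.or B) (B.or A)
  | andComm (A B : Frm2) : AC (A.and B) (B.and A)

/-- Arrow terms of 𝓐^st : generated from strict identities (`str h`, the
identity of the form multiset presented by both endpoints) and the
intermutation arrows cᵏ by composition, ∨ and ∧. -/
inductive ST : Frm2 → Frm2 → Type
  | str {A B : Frm2} : AC A B → ST A B
  | comp {A B C : Frm2} : ST B C → ST A B → ST A C
  | orM {A B C D : Frm2} : ST A B → ST C D → ST (A.or C) (B.or D)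
  | andM {A B C D : Frm2} : ST A B → ST C D → ST (A.and C) (B.and D)
  | ck (S T U V : Frm2) : ST ((S.and T).or (U.and V)) ((S.or U).and (T.or V))

/-- The identity arrow term. -/
def ST.idT (A : Frm2) : ST A A := ST.str (AC.refl A)

/-- Equality of arrows of 𝓐^st : the smallest congruence making `str`
arrows behave as (strict) identities, making ∨ and ∧ biendofunctors and cᵏ
natural, identifying `cᵏ_{[S,T,U,V]}`, `cᵏ_{[T,S,V,U]}`, `cᵏ_{[U,V,S,T]}`,
and containing the strict internal (1s) and external (2s) associativity
equations. -/
inductive SEq : ∀ {A B : Frm2}, ST A B → ST A B → Prop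
  | refl {A B : Frm2} (f : ST A B) : SEq f f
  | symm {A B : Frm2} {f g : ST A B} : SEq f g → SEq g f
  | trans {A B : Frm2} {f g h : ST A B} : SEq f g → SEq g h → SEq f h
  | comp_congr {A B C : Frm2} {g g' : ST B C} {f f' : ST A B} :
      SEq g g' → SEq f f' → SEq (g.comp f) (g'.comp f')
  | or_congr {A B C D : Frm2} {f f' : ST A B} {g g' : ST C D} :
      SEq f f' → SEq g g' → SEq (f.orM g) (f'.orM g')
  | and_congr {A B C D : Frm2} {f f' : ST A B} {g g' : ST C D} :
      SEq f f' → SEq g g' → SEq (f.andM g) (f'.andM g')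
  | id_comp {A B : Frm2} (f : ST A B) : SEq ((ST.idT B).comp f) f
  | comp_id {A B : Frm2} (f : ST A B) : SEq (f.comp (ST.idT A)) f
  | comp_assoc {A B C D : Frm2} (h : ST C D) (g : ST B C) (f : ST A B) :
      SEq ((h.comp g).comp f) (h.comp (g.comp f))
  | or_comp {A B C A' B' C' : Frm2} (g : ST B C) (f : ST A B) (g' : ST B' C') (f' : ST A' B') :
      SEq ((g.comp f).orM (g'.comp f')) ((g.orM g').comp (f.orM f'))
  | and_comp {A B C A' B' C' : Frm2} (g : ST B C) (f : ST A B) (g' : ST B' C') (f' : ST A' B') :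
      SEq ((g.comp f).andM (g'.comp f')) ((g.andM g').comp (f.andM f'))
  -- str arrows are strict identities between presentations of the same
  -- form multiset
  | str_comp {A B C : Frm2} (h₁ : AC A B) (h₂ : AC B C) :
      SEq ((ST.str h₂).comp (ST.str h₁)) (ST.str (h₁.trans h₂))
  | str_or {A A' B B' : Frm2} (h : AC A A') (h' : AC B B') :
      SEq ((ST.str h).orM (ST.str h')) (ST.str (h.orCongr h'))
  | str_and {A A' B B' : Frm2} (h : AC A A') (h' : AC B B') :
      SEq ((ST.str h).andM (ST.str h')) (ST.str (h.andCongr h'))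
  -- naturality of cᵏ
  | ck_nat {S S' T T' U U' V V' : Frm2}
      (f : ST S S') (g : ST T T') (h : ST U U') (k : ST V V') :
      SEq ((ST.ck S' T' U' V').comp ((f.andM g).orM (h.andM k)))
          (((f.orM h).andM (g.orM k)).comp (ST.ck S T U V))
  -- cᵏ_{[S,T,U,V]} = cᵏ_{[U,V,S,T]} : the two disjuncts of the source may
  -- be interchanged
  | ck_swap (S T U V : Frm2)
      (h₁ : AC ((S.and T).or (U.and V)) ((U.and V).or (S.and T)))
      (h₂ : AC ((U.or S).and (V.or T)) ((S.or U).and (T.or V))) :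
      SEq ((ST.str h₂).comp ((ST.ck U V S T).comp (ST.str h₁))) (ST.ck S T U V)
  -- cᵏ_{[S,T,U,V]} = cᵏ_{[T,S,V,U]} : the two conjuncts inside each
  -- disjunct of the source may be interchanged
  | ck_swap' (S T U V : Frm2)
      (h₁ : AC ((S.and T).or (U.and V)) ((T.and S).or (V.and U)))
      (h₂ : AC ((T.or V).and (S.or U)) ((S.or U).and (T.or V))) :
      SEq ((ST.str h₂).comp ((ST.ck T S V U).comp (ST.str h₁))) (ST.ck S T U V)
  -- the strict internal associativity condition (1s)
  | int_assoc (U V W X Y Z : Frm2)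
      (h₁ : AC ((U.and (V.and W)).or (X.and (Y.and Z)))
               (((U.and V).and W).or ((X.and Y).and Z)))
      (h₂ : AC (((U.or X).and (V.or Y)).and (W.or Z))
               ((U.or X).and ((V.or Y).and (W.or Z)))) :
      SEq (((ST.idT (U.or X)).andM (ST.ck V W Y Z)).comp (ST.ck U (V.and W) X (Y.and Z)))
          ((ST.str h₂).comp
            (((ST.ck U V X Y).andM (ST.idT (W.or Z))).comp
              ((ST.ck (U.and V) W (X.and Y) Z).comp (ST.str h₁))))
  -- the strict external associativity condition (2s)
  | ext_assoc (U V W X Y Z : Frm2)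
      (h₁ : AC ((U.and X).or ((V.and Y).or (W.and Z)))
               (((U.and X).or (V.and Y)).or (W.and Z)))
      (h₂ : AC (((U.or V).or W).and ((X.or Y).or Z))
               ((U.or (V.or W)).and (X.or (Y.or Z)))) :
      SEq ((ST.ck U X (V.or W) (Y.or Z)).comp ((ST.idT (U.and X)).orM (ST.ck V Y W Z)))
          ((ST.str h₂).comp
            (((ST.ck (U.or V) (X.or Y) W Z).comp
              ((ST.ck U X V Y).orM (ST.idT (W.and Z)))).comp (ST.str h₁)))

/-- The set of letters occurring in a formula. -/
def ltr : Frm2 → Finset ℕ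
  | Frm2.pl n => {n}
  | Frm2.or A B => ltr A ∪ ltr B
  | Frm2.and A B => ltr A ∪ ltr B

/-- Number of occurrences of the letter `n` in a formula. -/
def cnt2 (n : ℕ) : Frm2 → ℕ
  | Frm2.pl m => if m = n then 1 else 0
  | Frm2.or A B => cnt2 n A + cnt2 n B
  | Frm2.and A B => cnt2 n A + cnt2 n B

/-- A formula is diversified (presents a form set) when every letter occurs
in it at most once. -/
def Div2 (A : Frm2) : Prop := ∀ n : ℕ, cnt2 n A ≤ 1

/-- Subformula relation on formulas. -/
inductive Subf : Frm2 → Frm2 → Prop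
  | refl (A : Frm2) : Subf A A
  | orl {S A B : Frm2} : Subf S A → Subf S (A.or B)
  | orr {S A B : Frm2} : Subf S B → Subf S (A.or B)
  | andl {S A B : Frm2} : Subf S A → Subf S (A.and B)
  | andr {S A B : Frm2} : Subf S B → Subf S (A.and B)

/-- `S` is a subformset of `X` : some formula AC-equivalent to `S` is a
subformula of some formula AC-equivalent to `X`. -/
def SubFS (S X : Frm2) : Prop := ∃ X' S' : Frm2, AC X X' ∧ Subf S' X' ∧ AC S' S

end AST

namespace AST

theorem ltr_AC {A B : Frm2} (h : AC A B) : ltr A = ltr B := by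
  induction h with
  | refl => rfl
  | symm _ ih => exact ih.symm
  | trans _ _ ih1 ih2 => exact ih1.trans ih2
  | orCongr _ _ ih1 ih2 => simp [ltr, ih1, ih2]
  | andCongr _ _ ih1 ih2 => simp [ltr, ih1, ih2]
  | orAssoc A B C => simp [ltr, Finset.union_assoc]
  | andAssoc A B C => simp [ltr, Finset.union_assoc]
  | orComm A B => simp [ltr, Finset.union_comm]
  | andComm A B => simp [ltr, Finset.union_comm]

theorem ltr_ST {A B : Frm2} (u : ST A B) : ltr A = ltr B := by
  induction u with
  | str h => exact ltr_AC h
  | comp _ _ ih1 ih2 => exact ih2.trans ih1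
  | orM _ _ ih1 ih2 => simp [ltr, ih1, ih2]
  | andM _ _ ih1 ih2 => simp [ltr, ih1, ih2]
  | ck S T U V => ext n; simp [ltr]; tauto

/-- The key invariant: every conjunction in `A` (after any AC-regrouping)
has its two sides agreeing on whether their letters are contained in `P`. -/
def G (P : Set ℕ) : Frm2 → Prop
  | Frm2.pl _ => True
  | Frm2.or A B => G P A ∧ G P B
  | Frm2.and A B => G P A ∧ G P B ∧
      ((↑(ltr A) : Set ℕ) ⊆ P ↔ (↑(ltr B) : Set ℕ) ⊆ P)

theorem G_AC {P : Set ℕ} {A B : Frm2} (h : AC A B) : G P A ↔ G P B := by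
  induction h with
  | refl => exact Iff.rfl
  | symm _ ih => exact ih.symm
  | trans _ _ ih1 ih2 => exact ih1.trans ih2
  | orCongr _ _ ih1 ih2 => simp [G, ih1, ih2]
  | andCongr h1 h2 ih1 ih2 => simp [G, ih1, ih2, ltr_AC h1, ltr_AC h2]
  | orAssoc A B C => simp [G]; tauto
  | andAssoc A B C =>
      simp only [G, ltr, Finset.coe_union, Set.union_subset_iff]
      tauto
  | orComm A B => simp [G]; tauto
  | andComm A B => simp [G]; tauto

theorem G_subf {P : Set ℕ} {S A : Frm2} (h : Subf S A) (hG : G P A) : G P S := by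
  induction h with
  | refl => exact hG
  | orl _ ih => exact ih hG.1
  | orr _ ih => exact ih hG.2
  | andl _ ih => exact ih hG.1
  | andr _ ih => exact ih hG.2.1

theorem G_ST {P : Set ℕ} {A B : Frm2} (u : ST A B) (hG : G P A) : G P B := by
  induction u with
  | str h => exact (G_AC h).mp hG
  | comp _ _ ih1 ih2 => exact ih1 (ih2 hG)
  | orM _ _ ih1 ih2 => exact ⟨ih1 hG.1, ih2 hG.2⟩
  | andM f g ih1 ih2 =>
      exact ⟨ih1 hG.1, ih2 hG.2.1, by rw [← ltr_ST f, ← ltr_ST g]; exact hG.2.2⟩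
  | ck S T U V =>
      obtain ⟨⟨hS, hT, hST⟩, hU, hV, hUV⟩ := hG
      refine ⟨⟨hS, hU⟩, ⟨hT, hV⟩, ?_⟩
      simp only [ltr, Finset.coe_union, Set.union_subset_iff]
      tauto

theorem SubFS_orl {S A B : Frm2} (h : SubFS S A) : SubFS S (A.or B) := by
  obtain ⟨A', S', h1, h2, h3⟩ := h
  exact ⟨A'.or B, S', (AC.refl A).orCongr (AC.refl B) |>.trans
    (h1.orCongr (AC.refl B)), Subf.orl h2, h3⟩

theorem SubFS_orr {S A B : Frm2} (h : SubFS S B) : SubFS S (A.or B) := by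
  obtain ⟨B', S', h1, h2, h3⟩ := h
  exact ⟨A.or B', S', (AC.refl A).orCongr h1, Subf.orr h2, h3⟩

theorem SubFS_andl {S A B : Frm2} (h : SubFS S A) : SubFS S (A.and B) := by
  obtain ⟨A', S', h1, h2, h3⟩ := h
  exact ⟨A'.and B, S', h1.andCongr (AC.refl B), Subf.andl h2, h3⟩

theorem SubFS_andr {S A B : Frm2} (h : SubFS S B) : SubFS S (A.and B) := by
  obtain ⟨B', S', h1, h2, h3⟩ := h
  exact ⟨A.and B', S', (AC.refl A).andCongr h1, Subf.andr h2, h3⟩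

theorem G_of_hyp {P : Set ℕ} : ∀ X : Frm2,
    (∀ U V : Frm2, SubFS (U.and V) X →
      ((↑(ltr U) : Set ℕ) ⊆ P ↔ (↑(ltr V) : Set ℕ) ⊆ P)) → G P X := by
  intro X
  induction X with
  | pl n => intro _; trivial
  | or A B ihA ihB =>
      intro h
      exact ⟨ihA fun U V hs => h U V (SubFS_orl hs),
             ihB fun U V hs => h U V (SubFS_orr hs)⟩
  | and A B ihA ihB =>
      intro h
      refine ⟨ihA fun U V hs => h U V (SubFS_andl hs),
              ihB fun U V hs => h U V (SubFS_andr hs), ?_⟩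
      exact h A B ⟨A.and B, A.and B, AC.refl _, Subf.refl _, AC.refl _⟩

theorem hyp_of_G {P : Set ℕ} {Y : Frm2} (hG : G P Y) :
    ∀ U V : Frm2, SubFS (U.and V) Y →
      ((↑(ltr U) : Set ℕ) ⊆ P ↔ (↑(ltr V) : Set ℕ) ⊆ P) := by
  rintro U V ⟨Y', S', h1, h2, h3⟩
  have hS' : G P S' := G_subf h2 ((G_AC h1).mp hG)
  exact ((G_AC h3).mp hS').2.2

theorem ltr_nonempty (A : Frm2) : (ltr A).Nonempty := by
  induction A with
  | pl n => exact ⟨n, by simp [ltr]⟩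
  | or A B ihA ihB => exact ihA.mono (by simp [ltr, Finset.subset_union_left])
  | and A B ihA ihB => exact ihA.mono (by simp [ltr, Finset.subset_union_left])

theorem mem_ltr_iff {n : ℕ} {A : Frm2} : n ∈ ltr A ↔ 0 < cnt2 n A := by
  induction A with
  | pl m =>
      simp only [ltr, Finset.mem_singleton, cnt2]
      constructor
      · rintro rfl; simp
      · intro hc
        by_contra hne
        rw [if_neg (fun e => hne e.symm)] at hc
        exact absurd hc (by simp)
  | or A B ihA ihB => simp [ltr, cnt2, ihA, ihB, Nat.pos_iff_ne_zero, Nat.add_eq_zero]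
  | and A B ihA ihB => simp [ltr, cnt2, ihA, ihB, Nat.pos_iff_ne_zero, Nat.add_eq_zero]

theorem G_of_subset {P : Set ℕ} : ∀ {A : Frm2}, (↑(ltr A) : Set ℕ) ⊆ P → G P A := by
  intro A
  induction A with
  | pl n => intro _; trivial
  | or A B ihA ihB =>
      intro h
      rw [show ltr (A.or B) = ltr A ∪ ltr B from rfl, Finset.coe_union,
        Set.union_subset_iff] at h
      exact ⟨ihA h.1, ihB h.2⟩
  | and A B ihA ihB =>
      intro h
      rw [show ltr (A.and B) = ltr A ∪ ltr B from rfl, Finset.coe_union,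
        Set.union_subset_iff] at h
      exact ⟨ihA h.1, ihB h.2, iff_of_true h.1 h.2⟩

theorem G_of_disjoint {P : Set ℕ} : ∀ {A : Frm2}, (∀ n ∈ ltr A, (n : ℕ) ∉ P) → G P A := by
  intro A
  induction A with
  | pl n => intro _; trivial
  | or A B ihA ihB =>
      intro h
      refine ⟨ihA fun n hn => h n ?_, ihB fun n hn => h n ?_⟩ <;>
        simp [ltr, hn]
  | and A B ihA ihB =>
      intro h
      have hA : ∀ n ∈ ltr A, (n : ℕ) ∉ P := fun n hn => h n (by simp [ltr, hn])
      have hB : ∀ n ∈ ltr B, (n : ℕ) ∉ P := fun n hn => h n (by simp [ltr, hn])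
      refine ⟨ihA hA, ihB hB, iff_of_false ?_ ?_⟩
      · obtain ⟨n, hn⟩ := ltr_nonempty A
        exact fun hsub => hA n hn (hsub (by simpa using hn))
      · obtain ⟨n, hn⟩ := ltr_nonempty B
        exact fun hsub => hB n hn (hsub (by simpa using hn))

/-- Lemma 5.1 and Lemma 5.2 : if `u : X → Y` is an arrow of 𝓐^st between
form sets and `P` is a set of letters such that for every subformset `U∧V`
of `X` we have `let(U) ⊆ P` iff `let(V) ⊆ P`, then the same equivalence
holds for every subformset `U∧V` of `Y`; in particular, for any arrow
`u : X₁∨X₂ → Y` and every subformset `U∧V` of `Y`,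
`let(U) ⊆ let(X₁)` iff `let(V) ⊆ let(X₁)`. -/
theorem conjunctions_respect_letter_partitions :
    (∀ {X Y : Frm2} (_ : ST X Y) (P : Set ℕ), Div2 X → Div2 Y →
      (∀ U V : Frm2, SubFS (U.and V) X → ((↑(ltr U) : Set ℕ) ⊆ P ↔ (↑(ltr V) : Set ℕ) ⊆ P)) →
      (∀ U V : Frm2, SubFS (U.and V) Y → ((↑(ltr U) : Set ℕ) ⊆ P ↔ (↑(ltr V) : Set ℕ) ⊆ P))) ∧
    (∀ {X₁ X₂ Y : Frm2} (_ : ST (X₁.or X₂) Y), Div2 (X₁.or X₂) → Div2 Y →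
      ∀ U V : Frm2, SubFS (U.and V) Y → (ltr U ⊆ ltr X₁ ↔ ltr V ⊆ ltr X₁)) := by
  constructor
  · intro X Y u P _ _ h
    exact hyp_of_G (G_ST u (G_of_hyp X h))
  · intro X₁ X₂ Y u hdiv _ U V hs
    have hdisj : ∀ n ∈ ltr X₂, (n : ℕ) ∉ (↑(ltr X₁) : Set ℕ) := by
      intro n hn hn1
      have h1 : 0 < cnt2 n X₁ := mem_ltr_iff.mp (by simpa using hn1)
      have h2 : 0 < cnt2 n X₂ := mem_ltr_iff.mp hn
      have := hdiv n
      simp [cnt2] at this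
      omega
    have hG : G (↑(ltr X₁) : Set ℕ) (X₁.or X₂) :=
      ⟨G_of_subset (le_refl _), G_of_disjoint hdisj⟩
    have := hyp_of_G (G_ST u hG) U V hs
    simpa using this

end AST
end

section
/- In A^st, if u : X₁∨X₂ → Y is (X₁,X₂)-splitting, then Y with all letters of X₁ deleted equals X₂, and Y with all letters of X₂ deleted equals X₁; moreover if the target Y is a conjunction Y₁∧Y₂, then the main connective of both X₁ and X₂ is ∧. -/
namespace AST

/-- `AllCk Q u` holds when every occurrence of cᵏ in the arrow term `u`
satisfies the predicate `Q` on its four indices. -/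
def AllCk (Q : Frm2 → Frm2 → Frm2 → Frm2 → Prop) : ∀ {A B : Frm2}, ST A B → Prop
  | _, _, ST.str _ => True
  | _, _, ST.comp g f => AllCk Q g ∧ AllCk Q f
  | _, _, ST.orM f g => AllCk Q f ∧ AllCk Q g
  | _, _, ST.andM f g => AllCk Q f ∧ AllCk Q g
  | _, _, ST.ck S T U V => Q S T U V

/-- An occurrence `cᵏ_{[S,T,U,V]}` is (X₁,X₂)-splitting when one of
`let(S∧T)`, `let(U∧V)` is included in `let(X₁)` and the other in `let(X₂)`. -/
def SplitC (X₁ X₂ : Frm2) (S T U V : Frm2) : Prop :=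
  (ltr S ∪ ltr T ⊆ ltr X₁ ∧ ltr U ∪ ltr V ⊆ ltr X₂) ∨
  (ltr S ∪ ltr T ⊆ ltr X₂ ∧ ltr U ∪ ltr V ⊆ ltr X₁)

/-- An arrow term is (X₁,X₂)-splitting when every occurrence of cᵏ in it is
(X₁,X₂)-splitting. -/
def Splitting (X₁ X₂ : Frm2) {A B : Frm2} (u : ST A B) : Prop :=
  AllCk (SplitC X₁ X₂) u

/-- An arrow term is (X₁,X₂)-nonsplitting when no occurrence of cᵏ in it is
(X₁,X₂)-splitting. -/
def NonSplitting (X₁ X₂ : Frm2) {A B : Frm2} (u : ST A B) : Prop :=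
  AllCk (fun S T U V => ¬ SplitC X₁ X₂ S T U V) u

/-- Deletion of the letters in `P` from a formula (`none` when all letters
are deleted) : `Y^{-P}`. -/
def delF (P : Finset ℕ) : Frm2 → Option Frm2
  | Frm2.pl n => if n ∈ P then none else some (Frm2.pl n)
  | Frm2.or A B =>
      match delF P A, delF P B with
      | some a, some b => some (a.or b)
      | some a, none => some a
      | none, some b => some b
      | none, none => none
  | Frm2.and A B =>
      match delF P A, delF P B with
      | some a, some b => some (a.and b)
      | some a, none => some a
      | none, some b => some b
      | none, none => none

end AST

namespace AST

/-- Shape (main connective) of a formula. -/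
def shp : Frm2 → ℕ
  | Frm2.pl _ => 0
  | Frm2.or _ _ => 1
  | Frm2.and _ _ => 2

lemma AC.shp_eq {A B : Frm2} (h : AC A B) : shp A = shp B := by
  induction h with
  | symm _ ih => exact ih.symm
  | trans _ _ ih₁ ih₂ => exact ih₁.trans ih₂
  | _ => rfl

/-- Number of letter occurrences. -/
def sz : Frm2 → ℕ
  | Frm2.pl _ => 1
  | Frm2.or A B => sz A + sz B
  | Frm2.and A B => sz A + sz B

lemma AC.sz_eq {A B : Frm2} (h : AC A B) : sz A = sz B := by
  induction h <;> simp [sz, *] <;> omega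

lemma ST.sz_eq {A B : Frm2} (u : ST A B) : sz A = sz B := by
  induction u with
  | str h => exact h.sz_eq
  | comp g f ihg ihf => omega
  | orM f g ihf ihg => simp [sz]; omega
  | andM f g ihf ihg => simp [sz]; omega
  | ck S T U V => simp [sz]; omega

lemma sz_pos (A : Frm2) : 1 ≤ sz A := by
  induction A <;> simp [sz] <;> omega

lemma delF_none {P : Finset ℕ} {A : Frm2} (h : ltr A ⊆ P) : delF P A = none := by
  induction A with
  | pl n =>
      have : n ∈ P := h (by simp [ltr])
      simp [delF, this]
  | or A B ihA ihB =>
      rw [ltr, Finset.union_subset_iff] at h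
      simp [delF, ihA h.1, ihB h.2]
  | and A B ihA ihB =>
      rw [ltr, Finset.union_subset_iff] at h
      simp [delF, ihA h.1, ihB h.2]

lemma delF_disj {P : Finset ℕ} {A : Frm2} (h : Disjoint P (ltr A)) : delF P A = some A := by
  induction A with
  | pl n =>
      have : n ∉ P := by
        intro hn
        exact (Finset.disjoint_left.mp h hn) (by simp [ltr])
      simp [delF, this]
  | or A B ihA ihB =>
      rw [ltr, Finset.disjoint_union_right] at h
      simp [delF, ihA h.1, ihB h.2]
  | and A B ihA ihB =>
      rw [ltr, Finset.disjoint_union_right] at h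
      simp [delF, ihA h.1, ihB h.2]

/-- AC on optional formulas. -/
def OAC : Option Frm2 → Option Frm2 → Prop
  | none, none => True
  | some a, some b => AC a b
  | _, _ => False

lemma OAC.refl : ∀ o : Option Frm2, OAC o o
  | none => trivial
  | some a => AC.refl a

lemma OAC.symm : ∀ {o₁ o₂ : Option Frm2}, OAC o₁ o₂ → OAC o₂ o₁
  | none, none, _ => trivial
  | some _, some _, h => AC.symm h

lemma OAC.trans : ∀ {o₁ o₂ o₃ : Option Frm2}, OAC o₁ o₂ → OAC o₂ o₃ → OAC o₁ o₃
  | none, none, none, _, _ => trivial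
  | some _, some _, some _, h₁, h₂ => AC.trans h₁ h₂

def oor : Option Frm2 → Option Frm2 → Option Frm2
  | some a, some b => some (a.or b)
  | some a, none => some a
  | none, some b => some b
  | none, none => none

def oand : Option Frm2 → Option Frm2 → Option Frm2
  | some a, some b => some (a.and b)
  | some a, none => some a
  | none, some b => some b
  | none, none => none

lemma delF_or (P : Finset ℕ) (A B : Frm2) :
    delF P (A.or B) = oor (delF P A) (delF P B) := by
  cases h₁ : delF P A <;> cases h₂ : delF P B <;> simp [delF, oor, h₁, h₂]

lemma delF_and (P : Finset ℕ) (A B : Frm2) :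
    delF P (A.and B) = oand (delF P A) (delF P B) := by
  cases h₁ : delF P A <;> cases h₂ : delF P B <;> simp [delF, oand, h₁, h₂]

lemma OAC.oor_congr : ∀ {a a' b b' : Option Frm2},
    OAC a a' → OAC b b' → OAC (oor a b) (oor a' b')
  | none, none, none, none, _, _ => trivial
  | none, none, some _, some _, _, h₂ => h₂
  | some _, some _, none, none, h₁, _ => h₁
  | some _, some _, some _, some _, h₁, h₂ => AC.orCongr h₁ h₂

lemma OAC.oand_congr : ∀ {a a' b b' : Option Frm2},
    OAC a a' → OAC b b' → OAC (oand a b) (oand a' b')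
  | none, none, none, none, _, _ => trivial
  | none, none, some _, some _, _, h₂ => h₂
  | some _, some _, none, none, h₁, _ => h₁
  | some _, some _, some _, some _, h₁, h₂ => AC.andCongr h₁ h₂

lemma oor_assoc : ∀ a b c : Option Frm2, OAC (oor a (oor b c)) (oor (oor a b) c) := by
  intro a b c
  cases a <;> cases b <;> cases c <;>
    first
      | exact trivial
      | exact AC.refl _
      | exact AC.orAssoc _ _ _

lemma oand_assoc : ∀ a b c : Option Frm2, OAC (oand a (oand b c)) (oand (oand a b) c) := by
  intro a b c
  cases a <;> cases b <;> cases c <;>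
    first
      | exact trivial
      | exact AC.refl _
      | exact AC.andAssoc _ _ _

lemma oor_comm : ∀ a b : Option Frm2, OAC (oor a b) (oor b a) := by
  intro a b
  cases a <;> cases b <;>
    first
      | exact trivial
      | exact AC.refl _
      | exact AC.orComm _ _

lemma oand_comm : ∀ a b : Option Frm2, OAC (oand a b) (oand b a) := by
  intro a b
  cases a <;> cases b <;>
    first
      | exact trivial
      | exact AC.refl _
      | exact AC.andComm _ _

lemma ac_delF {P : Finset ℕ} {A B : Frm2} (h : AC A B) :
    OAC (delF P A) (delF P B) := by
  induction h with
  | refl A => exact OAC.refl _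
  | symm h ih => exact ih.symm
  | trans h₁ h₂ ih₁ ih₂ => exact ih₁.trans ih₂
  | orCongr h₁ h₂ ih₁ ih₂ => rw [delF_or, delF_or]; exact OAC.oor_congr ih₁ ih₂
  | andCongr h₁ h₂ ih₁ ih₂ => rw [delF_and, delF_and]; exact OAC.oand_congr ih₁ ih₂
  | orAssoc A B C => rw [delF_or, delF_or, delF_or, delF_or]; exact oor_assoc _ _ _
  | andAssoc A B C => rw [delF_and, delF_and, delF_and, delF_and]; exact oand_assoc _ _ _
  | orComm A B => rw [delF_or, delF_or]; exact oor_comm _ _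
  | andComm A B => rw [delF_and, delF_and]; exact oand_comm _ _

/-- The condition on an occurrence of cᵏ ensuring that deletion of the
letters `P` commutes with it. -/
def DelC (P : Finset ℕ) (S T U V : Frm2) : Prop :=
  (ltr S ∪ ltr T ⊆ P ∧ Disjoint P (ltr U ∪ ltr V)) ∨
  (Disjoint P (ltr S ∪ ltr T) ∧ ltr U ∪ ltr V ⊆ P)

lemma AllCk_mono {Q Q' : Frm2 → Frm2 → Frm2 → Frm2 → Prop}
    (hQ : ∀ S T U V, Q S T U V → Q' S T U V) :
    ∀ {A B : Frm2} (u : ST A B), AllCk Q u → AllCk Q' u := by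
  intro A B u
  induction u with
  | str h => exact fun _ => trivial
  | comp g f ihg ihf => exact fun h => ⟨ihg h.1, ihf h.2⟩
  | orM f g ihf ihg => exact fun h => ⟨ihf h.1, ihg h.2⟩
  | andM f g ihf ihg => exact fun h => ⟨ihf h.1, ihg h.2⟩
  | ck S T U V => exact hQ S T U V

lemma delF_ck {P : Finset ℕ} {S T U V : Frm2} (h : DelC P S T U V) :
    OAC (delF P ((S.and T).or (U.and V))) (delF P ((S.or U).and (T.or V))) := by
  rcases h with ⟨hST, hUV⟩ | ⟨hST, hUV⟩
  · rw [Finset.union_subset_iff] at hST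
    rw [Finset.disjoint_union_right] at hUV
    rw [delF_or, delF_and, delF_and, delF_and, delF_or, delF_or,
        delF_none hST.1, delF_none hST.2, delF_disj hUV.1, delF_disj hUV.2]
    exact AC.refl _
  · rw [Finset.disjoint_union_right] at hST
    rw [Finset.union_subset_iff] at hUV
    rw [delF_or, delF_and, delF_and, delF_and, delF_or, delF_or,
        delF_disj hST.1, delF_disj hST.2, delF_none hUV.1, delF_none hUV.2]
    exact AC.refl _

lemma del_invariant {P : Finset ℕ} :
    ∀ {A B : Frm2} (u : ST A B), AllCk (DelC P) u →
      OAC (delF P A) (delF P B) := by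
  intro A B u
  induction u with
  | str h => exact fun _ => ac_delF h
  | comp g f ihg ihf => exact fun h => (ihf h.2).trans (ihg h.1)
  | orM f g ihf ihg =>
      intro h
      rw [delF_or, delF_or]
      exact OAC.oor_congr (ihf h.1) (ihg h.2)
  | andM f g ihf ihg =>
      intro h
      rw [delF_and, delF_and]
      exact OAC.oand_congr (ihf h.1) (ihg h.2)
  | ck S T U V => exact delF_ck

lemma splitC_to_delC₁ {X₁ X₂ : Frm2} (hd : Disjoint (ltr X₁) (ltr X₂)) :
    ∀ S T U V, SplitC X₁ X₂ S T U V → DelC (ltr X₁) S T U V := by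
  intro S T U V h
  rcases h with ⟨h₁, h₂⟩ | ⟨h₁, h₂⟩
  · exact Or.inl ⟨h₁, hd.mono_right h₂⟩
  · exact Or.inr ⟨hd.mono_right h₁, h₂⟩

lemma splitC_to_delC₂ {X₁ X₂ : Frm2} (hd : Disjoint (ltr X₁) (ltr X₂)) :
    ∀ S T U V, SplitC X₁ X₂ S T U V → DelC (ltr X₂) S T U V := by
  intro S T U V h
  rcases h with ⟨h₁, h₂⟩ | ⟨h₁, h₂⟩
  · exact Or.inr ⟨hd.symm.mono_right h₁, h₂⟩
  · exact Or.inl ⟨h₁, hd.symm.mono_right h₂⟩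

lemma root_lemma {X₁ X₂ : Frm2} (hd : Disjoint (ltr X₁) (ltr X₂)) :
    ∀ {A B : Frm2} (u : ST A B), Splitting X₁ X₂ u → shp A = 1 → shp B = 2 →
    (∃ Z, delF (ltr X₁) A = some Z ∧ shp Z = 2) ∧
    (∃ Z, delF (ltr X₂) A = some Z ∧ shp Z = 2) := by
  intro A B u
  induction u with
  | str h => intro _ hA hB; rw [h.shp_eq] at hA; omega
  | @comp A C B g f ihg ihf =>
      intro hs hA hB
      match hC : C, hsC : shp C with
      | Frm2.pl n, _ =>
          -- impossible by size
          exfalso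
          have h1 : sz A = sz (Frm2.pl n) := f.sz_eq
          match A, hA with
          | Frm2.or A₁ A₂, _ =>
            have := sz_pos A₁; have := sz_pos A₂
            simp [sz] at h1; omega
      | Frm2.or C₁ C₂, _ =>
          obtain ⟨⟨Z₁, hZ₁, hs₁⟩, ⟨Z₂, hZ₂, hs₂⟩⟩ :=
            ihg hs.1 (by simp [shp]) hB
          constructor
          · have h₁ : OAC (delF (ltr X₁) A) (delF (ltr X₁) (C₁.or C₂)) :=
              del_invariant f (AllCk_mono (splitC_to_delC₁ hd) f hs.2)
            rw [hZ₁] at h₁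
            cases hA' : delF (ltr X₁) A with
            | none => rw [hA'] at h₁; exact absurd h₁ (by simp [OAC])
            | some Z' =>
                rw [hA'] at h₁
                exact ⟨Z', rfl, by rw [(h₁ : AC Z' Z₁).shp_eq]; exact hs₁⟩
          · have h₂ : OAC (delF (ltr X₂) A) (delF (ltr X₂) (C₁.or C₂)) :=
              del_invariant f (AllCk_mono (splitC_to_delC₂ hd) f hs.2)
            rw [hZ₂] at h₂
            cases hA' : delF (ltr X₂) A with
            | none => rw [hA'] at h₂; exact absurd h₂ (by simp [OAC])
            | some Z' =>
                rw [hA'] at h₂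
                exact ⟨Z', rfl, by rw [(h₂ : AC Z' Z₂).shp_eq]; exact hs₂⟩
      | Frm2.and C₁ C₂, _ =>
          exact ihf hs.2 hA (by simp [shp])
  | orM f g ihf ihg => intro _ _ hB; simp [shp] at hB
  | andM f g ihf ihg => intro _ hA _; simp [shp] at hA
  | ck S T U V =>
      intro hs _ _
      rcases hs with ⟨hST, hUV⟩ | ⟨hST, hUV⟩
      · rw [Finset.union_subset_iff] at hST hUV
        constructor
        · refine ⟨U.and V, ?_, rfl⟩
          rw [delF_or, delF_and, delF_and,
              delF_none hST.1, delF_none hST.2,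
              delF_disj (hd.mono_right hUV.1), delF_disj (hd.mono_right hUV.2)]
          rfl
        · refine ⟨S.and T, ?_, rfl⟩
          rw [delF_or, delF_and, delF_and,
              delF_disj (hd.symm.mono_right hST.1), delF_disj (hd.symm.mono_right hST.2),
              delF_none hUV.1, delF_none hUV.2]
          rfl
      · rw [Finset.union_subset_iff] at hST hUV
        constructor
        · refine ⟨S.and T, ?_, rfl⟩
          rw [delF_or, delF_and, delF_and,
              delF_disj (hd.mono_right hST.1), delF_disj (hd.mono_right hST.2),
              delF_none hUV.1, delF_none hUV.2]
          rfl
        · refine ⟨U.and V, ?_, rfl⟩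
          rw [delF_or, delF_and, delF_and,
              delF_none hST.1, delF_none hST.2,
              delF_disj (hd.symm.mono_right hUV.1), delF_disj (hd.symm.mono_right hUV.2)]
          rfl

lemma mem_ltr_cnt {n : ℕ} {A : Frm2} (h : n ∈ ltr A) : 1 ≤ cnt2 n A := by
  induction A with
  | pl m =>
      simp [ltr] at h
      simp [cnt2, h]
  | or A B ihA ihB =>
      rw [ltr, Finset.mem_union] at h
      rcases h with h | h
      · have := ihA h; simp [cnt2]; omega
      · have := ihB h; simp [cnt2]; omega
  | and A B ihA ihB =>
      rw [ltr, Finset.mem_union] at h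
      rcases h with h | h
      · have := ihA h; simp [cnt2]; omega
      · have := ihB h; simp [cnt2]; omega

lemma div_disjoint {X₁ X₂ : Frm2} (hX : Div2 (X₁.or X₂)) :
    Disjoint (ltr X₁) (ltr X₂) := by
  rw [Finset.disjoint_left]
  intro n h₁ h₂
  have := hX n
  have c₁ := mem_ltr_cnt h₁
  have c₂ := mem_ltr_cnt h₂
  simp [cnt2] at this
  omega

/-- Lemmas 5.6 and 5.7 : if `u : X₁∨X₂ → Y` is (X₁,X₂)-splitting, then
`Y^{-X₁} = X₂` and `Y^{-X₂} = X₁` (as form sets); moreover if `Y` is a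
conjunction `Y₁∧Y₂`, then the main connective of both `X₁` and `X₂` is ∧. -/
theorem splitting_arrow_deletion {X₁ X₂ Y : Frm2}
    (u : ST (X₁.or X₂) Y) (hX : Div2 (X₁.or X₂)) (hY : Div2 Y)
    (hs : Splitting X₁ X₂ u) :
    (∃ Z : Frm2, delF (ltr X₁) Y = some Z ∧ AC Z X₂) ∧
    (∃ Z : Frm2, delF (ltr X₂) Y = some Z ∧ AC Z X₁) ∧
    (∀ Y₁ Y₂ : Frm2, Y = Y₁.and Y₂ →
      (∃ A B : Frm2, X₁ = A.and B) ∧ (∃ A B : Frm2, X₂ = A.and B)) := by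
  have hd : Disjoint (ltr X₁) (ltr X₂) := div_disjoint hX
  have hsrc₁ : delF (ltr X₁) (X₁.or X₂) = some X₂ := by
    rw [delF_or, delF_none (subset_refl _), delF_disj hd]; rfl
  have hsrc₂ : delF (ltr X₂) (X₁.or X₂) = some X₁ := by
    rw [delF_or, delF_none (subset_refl _), delF_disj hd.symm]; rfl
  have h₁ : OAC (delF (ltr X₁) (X₁.or X₂)) (delF (ltr X₁) Y) :=
    del_invariant u (AllCk_mono (splitC_to_delC₁ hd) u hs)
  have h₂ : OAC (delF (ltr X₂) (X₁.or X₂)) (delF (ltr X₂) Y) :=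
    del_invariant u (AllCk_mono (splitC_to_delC₂ hd) u hs)
  rw [hsrc₁] at h₁
  rw [hsrc₂] at h₂
  refine ⟨?_, ?_, ?_⟩
  · cases hY' : delF (ltr X₁) Y with
    | none => rw [hY'] at h₁; exact absurd h₁ (by simp [OAC])
    | some Z => rw [hY'] at h₁; exact ⟨Z, rfl, (h₁ : AC X₂ Z).symm⟩
  · cases hY' : delF (ltr X₂) Y with
    | none => rw [hY'] at h₂; exact absurd h₂ (by simp [OAC])
    | some Z => rw [hY'] at h₂; exact ⟨Z, rfl, (h₂ : AC X₁ Z).symm⟩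
  · intro Y₁ Y₂ hY12
    subst hY12
    obtain ⟨⟨Z₁, hZ₁, hs₁⟩, ⟨Z₂, hZ₂, hs₂⟩⟩ :=
      root_lemma hd u hs (by simp [shp]) (by simp [shp])
    rw [hsrc₁] at hZ₁
    rw [hsrc₂] at hZ₂
    cases hZ₁
    cases hZ₂
    constructor
    · match X₁, hs₂ with
      | Frm2.and A B, _ => exact ⟨A, B, rfl⟩
    · match X₂, hs₁ with
      | Frm2.and A B, _ => exact ⟨A, B, rfl⟩

end AST
end
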